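/- Let θ ∈ (0, 1/4), let 0 < ε < 1/6, let C₀ > 0, and let H, h : (0,1] → [0,∞) be continuous functions. Assume that for every r ∈ [ε, 1/3]: (i) H(t) ≤ C₀ H(3r) for every t ∈ [r, 3r]; (ii) |h(t) − h(s)| ≤ C₀ H(3r) for every t, s ∈ [r, 3r]; and (iii) H(θr) ≤ (1/2) H(r) + C₀ (ε/r)^{1/2} ( H(3r) + h(3r) ). Then there exists a constant C depending only on C₀ and θ (in particular, independent of ε, H and h) such that max_{r ∈ [ε,1]} ( H(r) + h(r) ) ≤ C ( H(1) + h(1) ). -/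

import Mathlib

open Set

noncomputable section

set_option maxHeartbeats 2000000 in
/-- **Iteration lemma** (Shen): if `H, h : (0,1] → [0,∞)` are continuous, `H` is doubling-type
comparable on triples of scales, `h` has oscillation controlled by `H`, and `H` satisfies the
excess-decay inequality
`H(θr) ≤ (1/2) H(r) + C₀ (ε/r)^{1/2} (H(3r) + h(3r))` for `r ∈ [ε, 1/3]`,
then `max_{r ∈ [ε,1]} (H(r) + h(r)) ≤ C (H(1) + h(1))` with `C` depending only on `C₀` and
`θ` (independent of `ε`, `H` and `h`). -/
theorem iteration_lemma
    (θ C₀ : ℝ) (hθ : 0 < θ) (hθ' : θ < 1 / 4) (hC₀ : 0 < C₀) :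
    ∃ C : ℝ, 0 < C ∧
      ∀ ε : ℝ, 0 < ε → ε < 1 / 6 →
      ∀ H h : ℝ → ℝ,
        ContinuousOn H (Ioc 0 1) →
        ContinuousOn h (Ioc 0 1) →
        (∀ r ∈ Ioc (0 : ℝ) 1, 0 ≤ H r) →
        (∀ r ∈ Ioc (0 : ℝ) 1, 0 ≤ h r) →
        (∀ r ∈ Icc ε (1 / 3), ∀ t ∈ Icc r (3 * r), H t ≤ C₀ * H (3 * r)) →
        (∀ r ∈ Icc ε (1 / 3), ∀ t ∈ Icc r (3 * r), ∀ s ∈ Icc r (3 * r),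
            |h t - h s| ≤ C₀ * H (3 * r)) →
        (∀ r ∈ Icc ε (1 / 3),
            H (θ * r) ≤ (1 / 2) * H r + C₀ * Real.sqrt (ε / r) * (H (3 * r) + h (3 * r))) →
        ∀ r ∈ Icc ε 1, H r + h r ≤ C * (H 1 + h 1) := by
  classical
  have hθ1 : θ ≤ 1 := by linarith
  have hθ0 : (0:ℝ) ≤ θ := le_of_lt hθ
  obtain ⟨K, hK⟩ : ∃ K : ℕ, 1 / θ < 3 ^ K := pow_unbounded_of_one_lt (1 / θ) (by norm_num)
  have hKθ : 1 < 3 ^ K * θ := by rw [div_lt_iff₀ hθ] at hK; linarith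
  have h3K0 : (0:ℝ) ≤ 3 ^ K := pow_nonneg (by norm_num) K
  obtain ⟨C₁, hC₁1, hCC₁⟩ : ∃ c : ℝ, 1 ≤ c ∧ C₀ ≤ c := ⟨max C₀ 1, le_max_right _ _, le_max_left _ _⟩
  have hC₁0 : (0:ℝ) < C₁ := lt_of_lt_of_le one_pos hC₁1
  obtain ⟨CA, hCAdef⟩ : ∃ x : ℝ, x = C₁ ^ K := ⟨_, rfl⟩
  obtain ⟨CB, hCBdef⟩ : ∃ x : ℝ, x = (K : ℝ) * C₁ ^ K := ⟨_, rfl⟩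
  have hCA1 : 1 ≤ CA := by rw [hCAdef]; exact one_le_pow₀ hC₁1
  have hCA0 : 0 ≤ CA := by linarith
  have hCB0 : 0 ≤ CB := by
    rw [hCBdef]; exact mul_nonneg (Nat.cast_nonneg K) (by positivity)
  obtain ⟨μ, hμdef⟩ : ∃ x : ℝ, x = 2 * CB + 1 := ⟨_, rfl⟩
  have hμ1 : 1 ≤ μ := by rw [hμdef]; linarith
  have hμ0 : 0 ≤ μ := by linarith
  have hCACB : CA + CB ≤ μ := by
    rcases Nat.eq_zero_or_pos K with hK0 | hK0
    · rw [hμdef, hCAdef, hCBdef, hK0]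
      norm_num
    · have hK1 : (1:ℝ) ≤ (K:ℝ) := by exact_mod_cast hK0
      have h1 : CA ≤ CB := by
        rw [hCAdef, hCBdef]
        have hpK : (0:ℝ) ≤ C₁ ^ K := (pow_pos hC₁0 K).le
        have hprod : 0 ≤ ((K:ℝ) - 1) * C₁ ^ K := mul_nonneg (by linarith) hpK
        linarith only [hprod]
      rw [hμdef]; linarith
  obtain ⟨c₁, hc₁def⟩ : ∃ x : ℝ, x = μ * CA + CB + μ := ⟨_, rfl⟩
  have hc₁μ : μ ≤ c₁ := by
    rw [hc₁def]
    have := mul_nonneg hμ0 hCA0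
    linarith only [this, hCB0]
  have hc₁1 : 1 ≤ c₁ := le_trans hμ1 hc₁μ
  obtain ⟨E, hEdef⟩ : ∃ x : ℝ, x = Real.exp (4 * μ * C₁) := ⟨_, rfl⟩
  have hE1 : 1 ≤ E := by
    rw [hEdef]
    exact Real.one_le_exp (mul_nonneg (mul_nonneg (by norm_num) hμ0) (le_of_lt hC₁0))
  have hEpos : 0 < E := lt_of_lt_of_le one_pos hE1
  have hCpos : 0 < (2 * C₁ * CA + CB + 1) * (E * c₁) := by
    have h1 : 0 < C₁ * CA := mul_pos hC₁0 (by linarith)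
    exact mul_pos (by linarith) (mul_pos hEpos (by linarith))
  refine ⟨(2 * C₁ * CA + CB + 1) * (E * c₁), hCpos, ?_⟩
  intro ε hε hε6 H h _ _ hH0 hh0 hyp1 hyp2 hyp3
  have hH0' : ∀ x : ℝ, 0 < x → x ≤ 1 → 0 ≤ H x := fun x h1 h2 => hH0 x ⟨h1, h2⟩
  have hh0' : ∀ x : ℝ, 0 < x → x ≤ 1 → 0 ≤ h x := fun x h1 h2 => hh0 x ⟨h1, h2⟩
  have hpowpos : ∀ n : ℕ, 0 < θ ^ n := fun n => pow_pos hθ n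
  have hpowle1 : ∀ n : ℕ, θ ^ n ≤ 1 := fun n => pow_le_one₀ hθ0 hθ1
  have hpowsucc : ∀ n : ℕ, θ ^ (n+1) ≤ θ ^ n := fun n =>
    pow_le_pow_of_le_one hθ0 hθ1 (Nat.le_succ n)
  have hchainA : ∀ n : ℕ, θ ^ n ≤ 3 ^ K * θ ^ (n+1) := by
    intro n
    have hp := hpowpos n
    rw [pow_succ]
    have hprod : 0 ≤ (3 ^ K * θ - 1) * θ ^ n := mul_nonneg (by linarith) hp.le
    linarith only [hprod]
  -- upgraded hypotheses with C₁ ≥ max C₀ 1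
  have hyp1' : ∀ r ∈ Icc ε (1/3), ∀ t ∈ Icc r (3*r), H t ≤ C₁ * H (3*r) := by
    intro r hr t ht
    have h1 : 0 < 3*r := by have := hr.1; linarith
    have h2 : 3*r ≤ 1 := by have := hr.2; linarith
    exact le_trans (hyp1 r hr t ht) (mul_le_mul_of_nonneg_right hCC₁ (hH0' _ h1 h2))
  have hyp2' : ∀ r ∈ Icc ε (1/3), ∀ t ∈ Icc r (3*r), ∀ s ∈ Icc r (3*r),
      |h t - h s| ≤ C₁ * H (3*r) := by
    intro r hr t ht s hs
    have h1 : 0 < 3*r := by have := hr.1; linarith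
    have h2 : 3*r ≤ 1 := by have := hr.2; linarith
    exact le_trans (hyp2 r hr t ht s hs) (mul_le_mul_of_nonneg_right hCC₁ (hH0' _ h1 h2))
  -- Lemma A: upward chain comparison for H
  have lemA : ∀ m : ℕ, ∀ a b : ℝ, ε ≤ a → a ≤ b → b ≤ 1 → 3*ε ≤ b → b ≤ 3^m * a →
      H a ≤ C₁^m * H b := by
    intro m
    induction m with
    | zero =>
      intro a b h1 h2 h3 h4 h5
      have hab : a = b := le_antisymm h2 (by simpa using h5)
      simp [hab]
    | succ m ih =>
      intro a b h1 h2 h3 h4 h5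
      have hb0 : 0 ≤ H b := hH0' b (by linarith) h3
      by_cases hcase : b ≤ 3*a
      · have key := hyp1' (b/3) ⟨by linarith, by linarith⟩ a ⟨by linarith, by linarith⟩
        rw [show 3*(b/3) = b by ring] at key
        have hp : C₁ ≤ C₁^(m+1) := le_self_pow₀ hC₁1 (Nat.succ_ne_zero m)
        calc H a ≤ C₁ * H b := key
          _ ≤ C₁^(m+1) * H b := mul_le_mul_of_nonneg_right hp hb0
      · push_neg at hcase
        have h13 : a ≤ 1/3 := by linarith
        have key := hyp1' a ⟨h1, h13⟩ a ⟨le_refl a, by linarith⟩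
        have h5' : b ≤ 3^m * (3*a) := by
          calc b ≤ 3^(m+1) * a := h5
            _ = 3^m * (3*a) := by ring
        have hih := ih (3*a) b (by linarith) (by linarith) h3 h4 h5'
        calc H a ≤ C₁ * H (3*a) := key
          _ ≤ C₁ * (C₁^m * H b) := mul_le_mul_of_nonneg_left hih (le_of_lt hC₁0)
          _ = C₁^(m+1) * H b := by ring
  -- Lemma B: oscillation of h over bounded ratio
  have lemB : ∀ m : ℕ, ∀ a b : ℝ, ε ≤ a → a ≤ b → b ≤ 1 → 3*ε ≤ b → b ≤ 3^m * a →
      |h a - h b| ≤ (m : ℝ) * C₁^m * H b := by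
    intro m
    induction m with
    | zero =>
      intro a b h1 h2 h3 h4 h5
      have hab : a = b := le_antisymm h2 (by simpa using h5)
      simp [hab]
    | succ m ih =>
      intro a b h1 h2 h3 h4 h5
      have hb0 : 0 ≤ H b := hH0' b (by linarith) h3
      have hm0 : (0:ℝ) ≤ (m:ℝ) := Nat.cast_nonneg m
      have hpowpos' : (0:ℝ) < C₁^(m+1) := pow_pos hC₁0 (m+1)
      have hgrow : C₁^(m+1) ≤ ((m:ℝ)+1) * C₁^(m+1) :=
        le_mul_of_one_le_left (le_of_lt hpowpos') (by linarith)
      have hp : C₁ ≤ C₁^(m+1) := le_self_pow₀ hC₁1 (Nat.succ_ne_zero m)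
      by_cases hcase : b ≤ 3*a
      · have key := hyp2' (b/3) ⟨by linarith, by linarith⟩ a ⟨by linarith, by linarith⟩
          b ⟨by linarith, by linarith⟩
        rw [show 3*(b/3) = b by ring] at key
        calc |h a - h b| ≤ C₁ * H b := key
          _ ≤ ((m:ℝ)+1) * C₁^(m+1) * H b :=
              mul_le_mul_of_nonneg_right (le_trans hp hgrow) hb0
          _ = ((m+1 : ℕ) : ℝ) * C₁^(m+1) * H b := by push_cast; ring
      · push_neg at hcase
        have h13 : a ≤ 1/3 := by linarith
        have key := hyp2' a ⟨h1, h13⟩ a ⟨le_refl a, by linarith⟩ (3*a) ⟨by linarith, le_refl _⟩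
        have h5' : b ≤ 3^m * (3*a) := by
          calc b ≤ 3^(m+1) * a := h5
            _ = 3^m * (3*a) := by ring
        have hA := lemA m (3*a) b (by linarith) (by linarith) h3 h4 h5'
        have hih := ih (3*a) b (by linarith) (by linarith) h3 h4 h5'
        have tri : |h a - h b| ≤ |h a - h (3*a)| + |h (3*a) - h b| := abs_sub_le _ _ _
        have e2 : |h a - h (3*a)| ≤ C₁^(m+1) * H b := by
          calc |h a - h (3*a)| ≤ C₁ * H (3*a) := key
            _ ≤ C₁ * (C₁^m * H b) := mul_le_mul_of_nonneg_left hA (le_of_lt hC₁0)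
            _ = C₁^(m+1) * H b := by ring
        have hmono : (m:ℝ) * C₁^m * H b ≤ (m:ℝ) * C₁^(m+1) * H b := by
          have hpp : C₁^m ≤ C₁^(m+1) := pow_le_pow_right₀ hC₁1 (Nat.le_succ m)
          have := mul_le_mul_of_nonneg_right
            (mul_le_mul_of_nonneg_left hpp hm0) hb0
          linarith
        calc |h a - h b| ≤ |h a - h (3*a)| + |h (3*a) - h b| := tri
          _ ≤ C₁^(m+1) * H b + (m:ℝ) * C₁^m * H b := by linarith
          _ ≤ C₁^(m+1) * H b + (m:ℝ) * C₁^(m+1) * H b := by linarith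
          _ = ((m+1 : ℕ) : ℝ) * C₁^(m+1) * H b := by push_cast; ring
  -- the Lyapunov function
  obtain ⟨V, hVdef⟩ : ∃ V : ℕ → ℝ, V = fun i => μ * H (θ^i) + h (θ^i) := ⟨_, rfl⟩
  have hVval : ∀ i, V i = μ * H (θ^i) + h (θ^i) := fun i => by rw [hVdef]
  have hVnn : ∀ i, 0 ≤ V i := by
    intro i
    have h1 := hH0' (θ^i) (hpowpos i) (hpowle1 i)
    have h2 := hh0' (θ^i) (hpowpos i) (hpowle1 i)
    rw [hVval]
    exact add_nonneg (mul_nonneg hμ0 h1) h2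
  -- key recurrence
  have key : ∀ n : ℕ, ε ≤ θ^(n+1) → ε ≤ θ^(n+2) →
      V (n+2) ≤ V (n+1) + μ * (C₁ * Real.sqrt (ε / θ^(n+1))) * V n := by
    intro n he1 he2
    have hp1 : 0 < θ^(n+1) := hpowpos _
    have hpn : 0 < θ^n := hpowpos _
    have hp2 : 0 < θ^(n+2) := hpowpos _
    have hle13 : θ^(n+1) ≤ 1/3 := by
      have h1 : θ^(n+1) ≤ θ^1 := pow_le_pow_of_le_one hθ0 hθ1 (by omega)
      rw [pow_one] at h1; linarith
    have h3 := hyp3 (θ^(n+1)) ⟨he1, hle13⟩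
    rw [show θ * θ^(n+1) = θ^(n+2) by ring] at h3
    have hs0 : 0 ≤ Real.sqrt (ε / θ^(n+1)) := Real.sqrt_nonneg _
    have h3p1 : 0 < 3*θ^(n+1) := by linarith
    have h3p2 : 3*θ^(n+1) ≤ 1 := by linarith
    have hHh0 : 0 ≤ H (3*θ^(n+1)) + h (3*θ^(n+1)) :=
      add_nonneg (hH0' _ h3p1 h3p2) (hh0' _ h3p1 h3p2)
    have hup : C₀ * Real.sqrt (ε / θ^(n+1)) * (H (3*θ^(n+1)) + h (3*θ^(n+1)))
        ≤ C₁ * Real.sqrt (ε / θ^(n+1)) * (H (3*θ^(n+1)) + h (3*θ^(n+1))) :=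
      mul_le_mul_of_nonneg_right (mul_le_mul_of_nonneg_right hCC₁ hs0) hHh0
    have h3' : H (θ^(n+2)) ≤ (1/2) * H (θ^(n+1))
        + C₁ * Real.sqrt (ε / θ^(n+1)) * (H (3*θ^(n+1)) + h (3*θ^(n+1))) := by linarith
    -- comparison of scale 3θ^{n+1} with θ^n
    have c1 : ε ≤ 3*θ^(n+1) := by linarith
    have c2 : 3*θ^(n+1) ≤ θ^n := by
      rw [pow_succ]
      have hprod : 0 ≤ (1 - 3*θ) * θ^n := mul_nonneg (by linarith) hpn.le
      linarith only [hprod]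
    have c3 : θ^n ≤ 1 := hpowle1 n
    have c4 : 3*ε ≤ θ^n := by
      have e' : ε ≤ θ^n * θ := by rw [← pow_succ]; exact he1
      have hprod : 0 ≤ (1/4 - θ) * θ^n := mul_nonneg (by linarith) hpn.le
      linarith only [e', hprod, hpn.le]
    have c5 : θ^n ≤ 3^K * (3*θ^(n+1)) := by
      have h1 := hchainA n
      have h2 : 0 ≤ 3^K * θ^(n+1) := mul_nonneg h3K0 hp1.le
      linarith only [h1, h2]
    have hA3 : H (3*θ^(n+1)) ≤ CA * H (θ^n) := by
      have := lemA K (3*θ^(n+1)) (θ^n) c1 c2 c3 c4 c5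
      rw [← hCAdef] at this; exact this
    have hB3 : |h (3*θ^(n+1)) - h (θ^n)| ≤ CB * H (θ^n) := by
      have := lemB K (3*θ^(n+1)) (θ^n) c1 c2 c3 c4 c5
      rw [← hCBdef] at this; exact this
    have hB3' : h (3*θ^(n+1)) ≤ h (θ^n) + CB * H (θ^n) := by
      have := abs_le.mp hB3
      linarith [this.2]
    -- oscillation of h from θ^{n+2} to θ^{n+1}
    have d2 : θ^(n+2) ≤ θ^(n+1) := hpowsucc (n+1)
    have d3 : θ^(n+1) ≤ 1 := hpowle1 (n+1)
    have d4 : 3*ε ≤ θ^(n+1) := by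
      have e' : ε ≤ θ^(n+1) * θ := by rw [← pow_succ]; exact he2
      have hprod : 0 ≤ (1/4 - θ) * θ^(n+1) := mul_nonneg (by linarith) hp1.le
      linarith only [e', hprod, hp1.le]
    have d5 : θ^(n+1) ≤ 3^K * θ^(n+2) := hchainA (n+1)
    have hBrec : |h (θ^(n+2)) - h (θ^(n+1))| ≤ CB * H (θ^(n+1)) := by
      have := lemB K (θ^(n+2)) (θ^(n+1)) he2 d2 d3 d4 d5
      rw [← hCBdef] at this; exact this
    have hBrec' : h (θ^(n+2)) ≤ h (θ^(n+1)) + CB * H (θ^(n+1)) := by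
      have := abs_le.mp hBrec
      linarith [this.2]
    -- assemble
    have hA0nn : 0 ≤ H (θ^n) := hH0' _ hpn c3
    have hA1nn : 0 ≤ H (θ^(n+1)) := hH0' _ hp1 d3
    have hsum : H (3*θ^(n+1)) + h (3*θ^(n+1)) ≤ μ * H (θ^n) + h (θ^n) := by
      have hprod : 0 ≤ (μ - (CA + CB)) * H (θ^n) :=
        mul_nonneg (by linarith) hA0nn
      linarith only [hA3, hB3', hprod]
    obtain ⟨d, hddef⟩ : ∃ x : ℝ, x = C₁ * Real.sqrt (ε / θ^(n+1)) := ⟨_, rfl⟩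
    have hd0 : 0 ≤ d := by rw [hddef]; exact mul_nonneg (le_of_lt hC₁0) hs0
    have hd1 : d * (H (3*θ^(n+1)) + h (3*θ^(n+1))) ≤ d * (μ * H (θ^n) + h (θ^n)) :=
      mul_le_mul_of_nonneg_left hsum hd0
    have h3'' : H (θ^(n+2)) ≤ (1/2) * H (θ^(n+1)) + d * (μ * H (θ^n) + h (θ^n)) := by
      rw [hddef]; rw [hddef] at hd1; linarith
    have F1 : μ * H (θ^(n+2)) ≤ μ * ((1/2) * H (θ^(n+1)) + d * (μ * H (θ^n) + h (θ^n))) :=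
      mul_le_mul_of_nonneg_left h3'' hμ0
    have hμA1 : μ * H (θ^(n+1)) = 2*CB*H (θ^(n+1)) + H (θ^(n+1)) := by
      rw [hμdef]; ring
    rw [hVval, hVval, hVval, ← hddef]
    linarith only [F1, hBrec', hμA1, hA1nn]
  have W1nn : 0 ≤ max (V 1) (V 0) := le_trans (hVnn 0) (le_max_right _ _)
  -- exponential iteration bound
  have claim : ∀ n : ℕ, ε ≤ θ^(n+1) →
      max (V (n+1)) (V n) ≤ Real.exp (4*μ*C₁ * Real.sqrt (ε / θ^n)) * max (V 1) (V 0) := by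
    intro n
    induction n with
    | zero =>
      intro _
      have h1 : (1:ℝ) ≤ Real.exp (4*μ*C₁ * Real.sqrt (ε / θ^0)) :=
        Real.one_le_exp (mul_nonneg (mul_nonneg (mul_nonneg (by norm_num) hμ0)
          (le_of_lt hC₁0)) (Real.sqrt_nonneg _))
      exact le_mul_of_one_le_left W1nn h1
    | succ n ih =>
      intro h2
      have h1 : ε ≤ θ^(n+1) := le_trans h2 (hpowsucc (n+1))
      have hrec := key n h1 h2
      have hM := ih h1
      have hMnn : 0 ≤ max (V (n+1)) (V n) := le_trans (hVnn n) (le_max_right _ _)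
      have hV1M : V (n+1) ≤ max (V (n+1)) (V n) := le_max_left _ _
      have hV0M : V n ≤ max (V (n+1)) (V n) := le_max_right _ _
      obtain ⟨s, hsdef⟩ : ∃ x : ℝ, x = Real.sqrt (ε / θ^(n+1)) := ⟨_, rfl⟩
      rw [← hsdef] at hrec
      have hs0 : 0 ≤ s := by rw [hsdef]; exact Real.sqrt_nonneg _
      have hd0 : 0 ≤ μ * (C₁ * s) := mul_nonneg hμ0 (mul_nonneg (le_of_lt hC₁0) hs0)
      have hq : μ * (C₁ * s) * V n ≤ μ * (C₁ * s) * max (V (n+1)) (V n) :=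
        mul_le_mul_of_nonneg_left hV0M hd0
      have hVn2 : V (n+2) ≤ (1 + μ * (C₁ * s)) * max (V (n+1)) (V n) := by
        linarith only [hrec, hV1M, hq]
      have hmax2 : max (V (n+2)) (V (n+1)) ≤ (1 + μ * (C₁ * s)) * max (V (n+1)) (V n) := by
        apply max_le hVn2
        exact le_trans hV1M (le_mul_of_one_le_left hMnn (by linarith))
      have hexp : 1 + μ * (C₁ * s) ≤ Real.exp (μ * (C₁ * s)) := by
        linarith [Real.add_one_le_exp (μ * (C₁ * s))]
      have hsplit : Real.sqrt (ε / θ^n) = Real.sqrt θ * s := by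
        rw [hsdef, ← Real.sqrt_mul hθ0]
        congr 1
        have hne1 : θ^n ≠ 0 := ne_of_gt (hpowpos n)
        have hne2 : θ^(n+1) ≠ 0 := ne_of_gt (hpowpos (n+1))
        field_simp
        ring
      have hsθ : Real.sqrt θ ≤ 1/2 := by
        have : Real.sqrt θ < 1/2 := (Real.sqrt_lt' (by norm_num)).mpr (by norm_num; linarith)
        linarith
      have hsθ0 : 0 ≤ Real.sqrt θ := Real.sqrt_nonneg θ
      have hargs : μ * (C₁ * s) + 4*μ*C₁ * Real.sqrt (ε / θ^n) ≤ 4*μ*C₁*s := by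
        rw [hsplit]
        have hx : 0 ≤ μ * C₁ * s := mul_nonneg (mul_nonneg hμ0 (le_of_lt hC₁0)) hs0
        have hprod : 0 ≤ (μ * C₁ * s) * (1 - 2 * Real.sqrt θ) :=
          mul_nonneg hx (by linarith)
        linarith only [hprod, hx]
      calc max (V (n+2)) (V (n+1)) ≤ (1 + μ * (C₁ * s)) * max (V (n+1)) (V n) := hmax2
        _ ≤ Real.exp (μ * (C₁ * s)) * max (V (n+1)) (V n) :=
            mul_le_mul_of_nonneg_right hexp hMnn
        _ ≤ Real.exp (μ * (C₁ * s)) *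
            (Real.exp (4*μ*C₁ * Real.sqrt (ε / θ^n)) * max (V 1) (V 0)) :=
            mul_le_mul_of_nonneg_left hM (Real.exp_nonneg _)
        _ = Real.exp (μ * (C₁ * s) + 4*μ*C₁ * Real.sqrt (ε / θ^n)) * max (V 1) (V 0) := by
            rw [← mul_assoc, ← Real.exp_add]
        _ ≤ Real.exp (4*μ*C₁*s) * max (V 1) (V 0) :=
            mul_le_mul_of_nonneg_right (Real.exp_le_exp.mpr hargs) W1nn
        _ = Real.exp (4*μ*C₁*Real.sqrt (ε / θ^(n+1))) * max (V 1) (V 0) := by rw [hsdef]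
  -- bound on V0
  have hH1 : 0 ≤ H 1 := hH0' 1 one_pos (le_refl 1)
  have hh1 : 0 ≤ h 1 := hh0' 1 one_pos (le_refl 1)
  have hT0 : 0 ≤ H 1 + h 1 := by linarith
  have hV0b : V 0 ≤ c₁ * (H 1 + h 1) := by
    rw [hVval, pow_zero]
    have e1 : 0 ≤ (c₁ - μ) * H 1 := mul_nonneg (by linarith) hH1
    have e2 : 0 ≤ (c₁ - 1) * h 1 := mul_nonneg (by linarith) hh1
    linarith only [e1, e2]
  -- bound on max(V1, V0)
  have hV1b : ε ≤ θ → max (V 1) (V 0) ≤ c₁ * (H 1 + h 1) := by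
    intro hεθ
    have hr5 : (1:ℝ) ≤ 3^K * θ := le_of_lt hKθ
    have hAθ : H θ ≤ CA * H 1 := by
      have := lemA K θ 1 hεθ hθ1 (le_refl 1) (by linarith) hr5
      rw [← hCAdef] at this; exact this
    have hBθ : |h θ - h 1| ≤ CB * H 1 := by
      have := lemB K θ 1 hεθ hθ1 (le_refl 1) (by linarith) hr5
      rw [← hCBdef] at this; exact this
    have hBθ' : h θ ≤ h 1 + CB * H 1 := by
      have := abs_le.mp hBθ; linarith [this.2]
    apply max_le _ hV0b
    rw [hVval, pow_one]
    have F1 : μ * H θ ≤ μ * (CA * H 1) := mul_le_mul_of_nonneg_left hAθ hμ0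
    have e3 : c₁ * H 1 = μ * CA * H 1 + CB * H 1 + μ * H 1 := by rw [hc₁def]; ring
    have e4 : 0 ≤ μ * H 1 := mul_nonneg hμ0 hH1
    have e5 : 0 ≤ (c₁ - 1) * h 1 := mul_nonneg (by linarith) hh1
    linarith only [F1, hBθ', e3, e4, e5]
  -- global bound on V
  have Vbound : ∀ j : ℕ, ε ≤ θ^j → V j ≤ E * (c₁ * (H 1 + h 1)) := by
    intro j hj
    match j with
    | 0 =>
      have hc₁T : 0 ≤ c₁ * (H 1 + h 1) := mul_nonneg (by linarith) hT0
      calc V 0 ≤ c₁ * (H 1 + h 1) := hV0b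
        _ ≤ E * (c₁ * (H 1 + h 1)) := le_mul_of_one_le_left hc₁T hE1
    | (n+1) =>
      have hεθ : ε ≤ θ := by
        have h1 : θ^(n+1) ≤ θ^1 := pow_le_pow_of_le_one hθ0 hθ1 (by omega)
        rw [pow_one] at h1; linarith
      have h1 := claim n hj
      have h2 := hV1b hεθ
      have hsq : Real.sqrt (ε / θ^n) ≤ 1 := by
        rw [show (1:ℝ) = Real.sqrt 1 by simp]
        apply Real.sqrt_le_sqrt
        rw [div_le_one (hpowpos n)]
        exact le_trans hj (hpowsucc n)
      have hexpE : Real.exp (4*μ*C₁ * Real.sqrt (ε / θ^n)) ≤ E := by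
        rw [hEdef]
        apply Real.exp_le_exp.mpr
        have hx : 0 ≤ 4*μ*C₁ := mul_nonneg (mul_nonneg (by norm_num) hμ0) (le_of_lt hC₁0)
        have hprod : 0 ≤ (4*μ*C₁) * (1 - Real.sqrt (ε / θ^n)) :=
          mul_nonneg hx (by linarith)
        linarith only [hprod]
      calc V (n+1) ≤ max (V (n+1)) (V n) := le_max_left _ _
        _ ≤ Real.exp (4*μ*C₁ * Real.sqrt (ε / θ^n)) * max (V 1) (V 0) := h1
        _ ≤ E * (c₁ * (H 1 + h 1)) := mul_le_mul hexpE h2 W1nn (le_of_lt hEpos)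
  -- covering argument
  intro r hr
  obtain ⟨hr1, hr2⟩ := hr
  have hr0 : 0 < r := lt_of_lt_of_le hε hr1
  have hEc₁T : 0 ≤ E * (c₁ * (H 1 + h 1)) :=
    mul_nonneg (le_of_lt hEpos) (mul_nonneg (by linarith) hT0)
  have hfac1 : (1:ℝ) ≤ 2*C₁*CA + CB + 1 := by
    have := mul_nonneg (le_of_lt hC₁0) hCA0
    linarith only [this, hCB0]
  obtain ⟨N, hNspec⟩ : ∃ n : ℕ, θ^n < r := exists_pow_lt_of_lt_one hr0 (by linarith)
  have hex : ∃ n : ℕ, θ^n < r := ⟨N, hNspec⟩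
  have hN : θ^(Nat.find hex) < r := Nat.find_spec hex
  have hN0 : Nat.find hex ≠ 0 := by
    intro h0
    rw [h0, pow_zero] at hN
    linarith
  obtain ⟨m, hm⟩ : ∃ m, Nat.find hex = m + 1 :=
    ⟨Nat.find hex - 1, (Nat.succ_pred_eq_of_ne_zero hN0).symm⟩
  have hub : r ≤ θ^m := by
    by_contra hcon
    push_neg at hcon
    exact Nat.find_min hex (by omega) hcon
  have hlb : θ^(m+1) < r := by rw [← hm]; exact hN
  have hratio : θ^m ≤ 3^K * r := by
    have h1 := hchainA m
    have h2 : 3^K * θ^(m+1) ≤ 3^K * r := mul_le_mul_of_nonneg_left hlb.le h3K0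
    linarith only [h1, h2]
  have hVm : V m ≤ E * (c₁ * (H 1 + h 1)) := Vbound m (le_trans hr1 hub)
  have hAmnn : 0 ≤ H (θ^m) := hH0' _ (hpowpos m) (hpowle1 m)
  by_cases hcc : 3*ε ≤ θ^m
  · -- direct comparison r ↔ θ^m
    have hAr : H r ≤ CA * H (θ^m) := by
      have := lemA K r (θ^m) hr1 hub (hpowle1 m) hcc hratio
      rw [← hCAdef] at this; exact this
    have hBr : |h r - h (θ^m)| ≤ CB * H (θ^m) := by
      have := lemB K r (θ^m) hr1 hub (hpowle1 m) hcc hratio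
      rw [← hCBdef] at this; exact this
    have hBr' : h r ≤ h (θ^m) + CB * H (θ^m) := by
      have := abs_le.mp hBr; linarith [this.2]
    have step1 : H r + h r ≤ V m := by
      rw [hVval]
      have hprod : 0 ≤ (μ - (CA + CB)) * H (θ^m) := mul_nonneg (by linarith) hAmnn
      linarith only [hAr, hBr', hprod]
    calc H r + h r ≤ V m := step1
      _ ≤ E * (c₁ * (H 1 + h 1)) := hVm
      _ ≤ (2*C₁*CA + CB + 1) * (E * c₁) * (H 1 + h 1) := by
          have hF0 : 0 ≤ 2*C₁*CA + CB := by
            have := mul_nonneg (le_of_lt hC₁0) hCA0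
            linarith only [this, hCB0]
          have hprod : 0 ≤ (2*C₁*CA + CB) * (E * (c₁ * (H 1 + h 1))) :=
            mul_nonneg hF0 hEc₁T
          linarith only [hprod]
  · -- r is within [ε, 3ε); go through the window at ε, then to a θ-scale above 3ε
    push_neg at hcc
    have hrle : r ≤ 3*ε := by linarith
    have hεIcc : ε ∈ Icc ε (1/3) := ⟨le_refl ε, by linarith⟩
    have hw1 : H r ≤ C₁ * H (3*ε) := hyp1' ε hεIcc r ⟨hr1, hrle⟩
    have hw2 : |h r - h (3*ε)| ≤ C₁ * H (3*ε) :=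
      hyp2' ε hεIcc r ⟨hr1, hrle⟩ (3*ε) ⟨by linarith, le_refl _⟩
    have hw2' : h r ≤ h (3*ε) + C₁ * H (3*ε) := by
      have := abs_le.mp hw2; linarith [this.2]
    -- scale above 3ε
    obtain ⟨N', hN'spec⟩ : ∃ n : ℕ, θ^n < 3*ε :=
      exists_pow_lt_of_lt_one (by linarith) (by linarith)
    have hex2 : ∃ n : ℕ, θ^n < 3*ε := ⟨N', hN'spec⟩
    have hN2 : θ^(Nat.find hex2) < 3*ε := Nat.find_spec hex2
    have hN20 : Nat.find hex2 ≠ 0 := by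
      intro h0
      rw [h0, pow_zero] at hN2
      linarith
    obtain ⟨m', hm'⟩ : ∃ m', Nat.find hex2 = m' + 1 :=
      ⟨Nat.find hex2 - 1, (Nat.succ_pred_eq_of_ne_zero hN20).symm⟩
    have hub2 : 3*ε ≤ θ^m' := by
      by_contra hcon
      push_neg at hcon
      exact Nat.find_min hex2 (by omega) hcon
    have hlb2 : θ^(m'+1) < 3*ε := by rw [← hm']; exact hN2
    have hratio2 : θ^m' ≤ 3^K * (3*ε) := by
      have h1 := hchainA m'
      have h2 : 3^K * θ^(m'+1) ≤ 3^K * (3*ε) := mul_le_mul_of_nonneg_left hlb2.le h3K0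
      linarith only [h1, h2]
    have hA2 : H (3*ε) ≤ CA * H (θ^m') := by
      have := lemA K (3*ε) (θ^m') (by linarith) hub2 (hpowle1 m') hub2 hratio2
      rw [← hCAdef] at this; exact this
    have hB2 : |h (3*ε) - h (θ^m')| ≤ CB * H (θ^m') := by
      have := lemB K (3*ε) (θ^m') (by linarith) hub2 (hpowle1 m') hub2 hratio2
      rw [← hCBdef] at this; exact this
    have hB2' : h (3*ε) ≤ h (θ^m') + CB * H (θ^m') := by
      have := abs_le.mp hB2; linarith [this.2]
    have hVm' : V m' ≤ E * (c₁ * (H 1 + h 1)) := Vbound m' (by linarith)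
    have hAm'nn : 0 ≤ H (θ^m') := hH0' _ (hpowpos m') (hpowle1 m')
    have hBm'nn : 0 ≤ h (θ^m') := hh0' _ (hpowpos m') (hpowle1 m')
    have step1 : H r + h r ≤ (2*C₁*CA + CB) * H (θ^m') + h (θ^m') := by
      have h3ε1 : 0 < 3*ε := by linarith
      have h3ε2 : 3*ε ≤ 1 := by linarith
      have hH3εnn : 0 ≤ H (3*ε) := hH0' _ h3ε1 h3ε2
      have hup2 : C₁ * H (3*ε) ≤ C₁ * (CA * H (θ^m')) :=
        mul_le_mul_of_nonneg_left hA2 (le_of_lt hC₁0)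
      linarith only [hw1, hw2', hB2', hup2]
    have step2 : (2*C₁*CA + CB) * H (θ^m') + h (θ^m') ≤ (2*C₁*CA + CB + 1) * V m' := by
      rw [hVval]
      have hF0 : 0 ≤ 2*C₁*CA + CB := by
        have := mul_nonneg (le_of_lt hC₁0) hCA0
        linarith only [this, hCB0]
      have p1 : 0 ≤ (2*C₁*CA + CB) * (μ - 1) * H (θ^m') :=
        mul_nonneg (mul_nonneg hF0 (by linarith)) hAm'nn
      have p2 : 0 ≤ (2*C₁*CA + CB) * h (θ^m') := mul_nonneg hF0 hBm'nn
      have p3 : 0 ≤ μ * H (θ^m') := mul_nonneg hμ0 hAm'nn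
      linarith only [p1, p2, p3]
    calc H r + h r ≤ (2*C₁*CA + CB) * H (θ^m') + h (θ^m') := step1
      _ ≤ (2*C₁*CA + CB + 1) * V m' := step2
      _ ≤ (2*C₁*CA + CB + 1) * (E * (c₁ * (H 1 + h 1))) :=
          mul_le_mul_of_nonneg_left hVm' (by linarith)
      _ = (2*C₁*CA + CB + 1) * (E * c₁) * (H 1 + h 1) := by ring
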